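/- Let d ≥ 2, let μ = m·e_1 ∈ ℝ^d with m > 0, let η > 0 and σ ≥ 0, and let (w_t)_{t≥1} in ℝ^d satisfy the population dynamic w_{t+1} = (1 + η σ²) w_t + η ⟨w_t, μ⟩ μ for all t ≥ 1. Write a_t = ⟨w_t, μ⟩, b_t = √(Σ_{i=2}^d w_t[i]²), and r_t = a_t/b_t. Suppose a_1 > 0 and b_1 > 0. Then (i) r_{t+1} = r_1 (1 + η m²/(1 + η σ²))^t for all t ≥ 1, and (ii) for every ε ∈ (0,1), if t − 1 ≥ (1/2)·log(m²/(ε r_1²))/log(1 + η m²/(1 + η σ²)), then ⟨w_t, μ⟩ > 0 and ⟨w_t, μ⟩²/(‖w_t‖² m²) ≥ 1 − ε; i.e., w_t is an ε-optimal predictor. -/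

import Mathlib

open scoped RealInnerProductSpace

/-- GD with conjugate labels under square loss (population dynamic
w_{t+1} = (1 + η σ²) w_t + η ⟨w_t, μ⟩ μ) has the ratio r_t = a_t/b_t growing as
r_{t+1} = r_1 (1 + η m²/(1 + η σ²))^t, and after
t − 1 ≥ (1/2)·log(m²/(ε r_1²))/log(1 + η m²/(1 + η σ²)) iterations, w_t is an
ε-optimal predictor. -/
theorem stmt_5 (d : ℕ) (hd : 2 ≤ d) (m η σ : ℝ) (hm : 0 < m) (hη : 0 < η)
    (hσ : 0 ≤ σ)
    (μ : EuclideanSpace ℝ (Fin d))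
    (hμ : μ = EuclideanSpace.single (⟨0, by omega⟩ : Fin d) m)
    (w : ℕ → EuclideanSpace ℝ (Fin d))
    (hrec : ∀ t ≥ 1,
      w (t + 1) = (1 + η * σ ^ 2) • w t + (η * ⟪w t, μ⟫) • μ)
    (a b r : ℕ → ℝ)
    (ha : ∀ t, a t = ⟪w t, μ⟫)
    (hb : ∀ t, b t = Real.sqrt
      (∑ i ∈ Finset.univ.filter (fun i : Fin d => i ≠ ⟨0, by omega⟩), (w t i) ^ 2))
    (hr : ∀ t, r t = a t / b t)
    (ha1 : a 1 > 0) (hb1 : b 1 > 0) :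
    (∀ t ≥ 1, r (t + 1) = r 1 * (1 + η * m ^ 2 / (1 + η * σ ^ 2)) ^ t) ∧
    (∀ ε : ℝ, 0 < ε → ε < 1 → ∀ t : ℕ, 1 ≤ t →
      (t : ℝ) - 1 ≥
        (1 / 2) * Real.log (m ^ 2 / (ε * (r 1) ^ 2)) /
          Real.log (1 + η * m ^ 2 / (1 + η * σ ^ 2)) →
      ⟪w t, μ⟫ > 0 ∧ ⟪w t, μ⟫ ^ 2 / (‖w t‖ ^ 2 * m ^ 2) ≥ 1 - ε) := by
  have hz : (0:ℕ) < d := by omega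
  set z : Fin d := ⟨0, hz⟩ with hzdef
  set c : ℝ := 1 + η * σ ^ 2 with hcdef
  set q : ℝ := 1 + η * m ^ 2 / c with hqdef
  have hc : 0 < c := by positivity
  have hq1 : 1 < q := by
    rw [hqdef]
    have : 0 < η * m ^ 2 / c := by positivity
    linarith
  have hq0 : 0 < q := by linarith
  have hinner : ∀ v : EuclideanSpace ℝ (Fin d), ⟪v, μ⟫ = m * v z := by
    intro v
    rw [hμ]
    simp [EuclideanSpace.inner_single_right, mul_comm]
  have hμμ : ⟪μ, μ⟫ = m ^ 2 := by
    rw [hinner μ, hμ]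
    simp [sq]
  -- a recurrence
  have haRec : ∀ t, 1 ≤ t → a (t + 1) = (c + η * m ^ 2) * a t := by
    intro t ht
    rw [ha, hrec t ht, inner_add_left, real_inner_smul_left, real_inner_smul_left,
      hμμ, ← ha]
    ring
  -- component recurrence off coordinate z
  have hcomp : ∀ t, 1 ≤ t → ∀ i : Fin d, i ≠ z → w (t + 1) i = c * w t i := by
    intro t ht i hi
    have hμi : μ i = 0 := by rw [hμ]; simp [hi]
    rw [hrec t ht]
    simp [PiLp.add_apply, PiLp.smul_apply, smul_eq_mul, hμi]
  -- b recurrence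
  have hbRec : ∀ t, 1 ≤ t → b (t + 1) = c * b t := by
    intro t ht
    rw [hb, hb]
    have hsum : ∑ i ∈ Finset.univ.filter (fun i : Fin d => i ≠ z), (w (t+1) i) ^ 2
        = c ^ 2 * ∑ i ∈ Finset.univ.filter (fun i : Fin d => i ≠ z), (w t i) ^ 2 := by
      rw [Finset.mul_sum]
      refine Finset.sum_congr rfl ?_
      intro i hi
      have hi' : i ≠ z := by simpa using hi
      rw [hcomp t ht i hi']
      ring
    rw [hsum, Real.sqrt_mul (by positivity), Real.sqrt_sq hc.le]
  -- positivity
  have hpos : ∀ t, 1 ≤ t → 0 < a t ∧ 0 < b t := by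
    intro t ht
    induction t, ht using Nat.le_induction with
    | base => exact ⟨ha1, hb1⟩
    | succ n hn ih =>
      constructor
      · rw [haRec n hn]
        have h1 : 0 < c + η * m ^ 2 := by positivity
        exact mul_pos h1 ih.1
      · rw [hbRec n hn]
        exact mul_pos hc ih.2
  -- ratio formula
  have hrq : ∀ t, 1 ≤ t → r t = r 1 * q ^ (t - 1) := by
    intro t ht
    induction t, ht using Nat.le_induction with
    | base => simp
    | succ n hn ih =>
      have hbn := (hpos n hn).2
      rw [hr, haRec n hn, hbRec n hn]
      have hstep : (c + η * m ^ 2) * a n / (c * b n) = q * (a n / b n) := by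
        rw [hqdef]
        field_simp
      rw [hstep, ← hr, ih, Nat.add_sub_cancel]
      conv_rhs => rw [← Nat.sub_add_cancel hn]
      rw [pow_succ]
      ring
  constructor
  · intro t ht
    have := hrq (t + 1) (by omega)
    simpa [Nat.add_sub_cancel] using this
  · intro ε hε0 hε1 t ht hT
    have hAt := (hpos t ht).1
    have hBt := (hpos t ht).2
    have hr1 : 0 < r 1 := by rw [hr]; exact div_pos ha1 hb1
    have hlogq : 0 < Real.log q := Real.log_pos hq1
    set n := t - 1 with hndef
    have hnt : (t : ℝ) - 1 = (n : ℝ) := by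
      have htn : t = n + 1 := by omega
      rw [htn]; push_cast; ring
    rw [hnt] at hT
    have hL : Real.log (m ^ 2 / (ε * (r 1) ^ 2)) ≤ 2 * (n : ℝ) * Real.log q := by
      have := (div_le_iff₀ hlogq).mp hT
      linarith
    have hpow : m ^ 2 / (ε * (r 1) ^ 2) ≤ q ^ (2 * n) := by
      have h1 : q ^ (2 * n) = Real.exp (((2 * n : ℕ) : ℝ) * Real.log q) := by
        rw [Real.exp_nat_mul, Real.exp_log hq0]
      rw [h1]
      calc m ^ 2 / (ε * (r 1) ^ 2)
          = Real.exp (Real.log (m ^ 2 / (ε * (r 1) ^ 2))) :=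
            (Real.exp_log (by positivity)).symm
        _ ≤ _ := by
            apply Real.exp_le_exp.mpr
            push_cast
            linarith
    have hrt : r t = r 1 * q ^ n := hrq t ht
    have hrt2 : m ^ 2 / ε ≤ (r t) ^ 2 := by
      have hsq : (r t) ^ 2 = (r 1) ^ 2 * q ^ (2 * n) := by
        rw [hrt, mul_pow, ← pow_mul, Nat.mul_comm n 2]
      rw [hsq]
      calc m ^ 2 / ε = (r 1) ^ 2 * (m ^ 2 / (ε * (r 1) ^ 2)) := by
            field_simp
        _ ≤ (r 1) ^ 2 * q ^ (2 * n) :=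
            mul_le_mul_of_nonneg_left hpow (sq_nonneg _)
    have hArB : a t = r t * b t := by
      rw [hr]; field_simp
    have key : m ^ 2 * (b t) ^ 2 ≤ ε * (a t) ^ 2 := by
      have h2 : m ^ 2 / ε * (b t) ^ 2 ≤ (r t) ^ 2 * (b t) ^ 2 :=
        mul_le_mul_of_nonneg_right hrt2 (sq_nonneg _)
      calc m ^ 2 * (b t) ^ 2 = ε * (m ^ 2 / ε * (b t) ^ 2) := by
            field_simp
        _ ≤ ε * ((r t) ^ 2 * (b t) ^ 2) := mul_le_mul_of_nonneg_left h2 hε0.le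
        _ = ε * (r t * b t) ^ 2 := by ring
        _ = ε * (a t) ^ 2 := by rw [← hArB]
    -- norm decomposition
    have hwz : w t z = a t / m := by
      have h := hinner (w t)
      rw [← ha] at h
      field_simp [h]
      rw [h]; ring
    have hbsq : (b t) ^ 2
        = ∑ i ∈ Finset.univ.filter (fun i : Fin d => i ≠ z), (w t i) ^ 2 := by
      rw [hb]
      exact Real.sq_sqrt (by positivity)
    have hnorm : ‖w t‖ ^ 2 = (w t z) ^ 2 + (b t) ^ 2 := by
      have h1 : ‖w t‖ ^ 2 = ∑ i : Fin d, (w t i) ^ 2 := by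
        rw [EuclideanSpace.norm_eq, Real.sq_sqrt (by positivity)]
        simp [Real.norm_eq_abs, sq_abs]
      rw [h1, hbsq, Finset.filter_ne']
      exact (Finset.add_sum_erase _ _ (Finset.mem_univ z)).symm
    have hDen : ‖w t‖ ^ 2 * m ^ 2 = (a t) ^ 2 + m ^ 2 * (b t) ^ 2 := by
      rw [hnorm, hwz]
      field_simp
    constructor
    · rw [← ha]; exact hAt
    · rw [← ha, hDen, ge_iff_le, le_div_iff₀ (by positivity)]
      have h3 : 0 ≤ ε * (m ^ 2 * (b t) ^ 2) := by positivity
      linarith [key, h3]
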